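/- Let f : ℝ² → ℝ be smooth and G-invariant, with Fourier coefficients α_n(q) = 2∫_{-1/2}^{1/2} f(uq,q) cos(2nπu) du. Then for every i ≥ 0, k ≥ 1, and M > 0, there is a constant K (independent of n) such that |α_n^{(i)}(q)/q^k| ≤ K/n^k for all q with |q| < M, q ≠ 0. -/

import Mathlib

open Real MeasureTheory intervalIntegral Set


private lemma stmt6_key' (F : ℝ × ℝ → ℝ) (hF : ContDiff ℝ (⊤ : ℕ∞) F) (j : ℕ)
    (w v : ℝ × ℝ) (t : ℝ) :
    HasDerivAt (fun s : ℝ => iteratedFDeriv ℝ j F (w + s • v) (fun _ => v))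
      (iteratedFDeriv ℝ (j + 1) F (w + t • v) (fun _ => v)) t := by
  have hγ : HasDerivAt (fun s : ℝ => w + s • v) v t := by
    simpa using ((hasDerivAt_id t).smul_const v).const_add w
  have hΦ : Differentiable ℝ (iteratedFDeriv ℝ j F) :=
    (hF.iteratedFDeriv_right (m := (⊤ : ℕ∞)) (i := j) (by exact_mod_cast le_top)).differentiable (by simp)
  have h1 : HasDerivAt (fun s : ℝ => iteratedFDeriv ℝ j F (w + s • v))
      (fderiv ℝ (iteratedFDeriv ℝ j F) (w + t • v) v) t :=
    (hΦ (w + t • v)).hasFDerivAt.comp_hasDerivAt t hγ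
  have h2 := ((ContinuousMultilinearMap.apply ℝ (fun _ : Fin j => ℝ × ℝ) ℝ
      (fun _ => v)).hasFDerivAt).comp_hasDerivAt t h1
  rw [iteratedFDeriv_succ_apply_left]
  exact h2


private lemma stmt6_key (F : ℝ × ℝ → ℝ) (hF : ContDiff ℝ (⊤ : ℕ∞) F) (j : ℕ)
    (w v : ℝ × ℝ) : ∀ t : ℝ, iteratedDeriv j (fun s : ℝ => F (w + s • v)) t
      = iteratedFDeriv ℝ j F (w + t • v) (fun _ => v) := by
  induction j with
  | zero => intro t; simp
  | succ j ih =>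
    intro t
    rw [iteratedDeriv_succ, funext ih]
    exact (stmt6_key' F hF j w v t).deriv

private lemma stmt6_smooth_eval (F : ℝ × ℝ → ℝ) (hF : ContDiff ℝ (⊤ : ℕ∞) F) (j : ℕ)
    (v : Fin j → ℝ × ℝ) :
    ContDiff ℝ (⊤ : ℕ∞) (fun x => iteratedFDeriv ℝ j F x v) :=
  (ContinuousMultilinearMap.apply ℝ (fun _ : Fin j => ℝ × ℝ) ℝ v).contDiff.comp
    (hF.iteratedFDeriv_right (m := (⊤ : ℕ∞)) (by exact_mod_cast le_top))
private lemma stmt6_keyq (F : ℝ × ℝ → ℝ) (hF : ContDiff ℝ (⊤ : ℕ∞) F) (j : ℕ) (u q : ℝ) :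
    iteratedDeriv j (fun q : ℝ => F (u, q)) q
      = iteratedFDeriv ℝ j F (u, q) (fun _ => ((0:ℝ), (1:ℝ))) := by
  have h := stmt6_key F hF j (u, 0) (0, 1) q
  simp only [Prod.smul_mk, Prod.mk_add_mk, smul_eq_mul, mul_zero, mul_one, add_zero,
    zero_add] at h
  exact h

private lemma stmt6_keyq' (F : ℝ × ℝ → ℝ) (hF : ContDiff ℝ (⊤ : ℕ∞) F) (j : ℕ) (u q : ℝ) :
    HasDerivAt (fun q : ℝ => iteratedFDeriv ℝ j F (u, q) (fun _ => ((0:ℝ), (1:ℝ))))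
      (iteratedFDeriv ℝ (j + 1) F (u, q) (fun _ => ((0:ℝ), (1:ℝ)))) q := by
  have h := stmt6_key' F hF j (u, 0) (0, 1) q
  simp only [Prod.smul_mk, Prod.mk_add_mk, smul_eq_mul, mul_zero, mul_one, add_zero,
    zero_add] at h
  exact h

/-- Differentiation under the interval integral, iterated. -/
private lemma stmt6_UI (H : ℝ × ℝ → ℝ) (hH : ContDiff ℝ (⊤ : ℕ∞) H) (i : ℕ) (a b : ℝ) :
    ∀ q : ℝ, iteratedDeriv i (fun q : ℝ => ∫ u in a..b, H (u, q)) q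
      = ∫ u in a..b, iteratedDeriv i (fun q : ℝ => H (u, q)) q := by
  induction i with
  | zero => intro q; simp
  | succ i ih =>
    intro q
    have hΨcont : ∀ j : ℕ, Continuous (fun x : ℝ × ℝ =>
        iteratedFDeriv ℝ j H x (fun _ => ((0:ℝ), (1:ℝ)))) := fun j =>
      (stmt6_smooth_eval H hH j _).continuous
    have hrw : iteratedDeriv i (fun q : ℝ => ∫ u in a..b, H (u, q))
        = fun q : ℝ => ∫ u in a..b, iteratedFDeriv ℝ i H (u, q) (fun _ => ((0:ℝ), (1:ℝ))) := by
      funext q'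
      rw [ih q']
      exact integral_congr fun u _ => stmt6_keyq H hH i u q'
    rw [iteratedDeriv_succ, hrw]
    -- bound for the derivative on a compact neighbourhood
    obtain ⟨C, hC⟩ := (IsCompact.exists_bound_of_continuousOn
      ((isCompact_uIcc (a := a) (b := b)).prod (isCompact_Icc (a := q - 1) (b := q + 1)))
      ((hΨcont (i + 1)).continuousOn))
    have key := (intervalIntegral.hasDerivAt_integral_of_dominated_loc_of_deriv_le
      (F := fun q u => iteratedFDeriv ℝ i H (u, q) (fun _ => ((0:ℝ), (1:ℝ))))
      (F' := fun q u => iteratedFDeriv ℝ (i + 1) H (u, q) (fun _ => ((0:ℝ), (1:ℝ))))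
      (x₀ := q) (a := a) (b := b) (μ := volume) (bound := fun _ => C)
      (s := Metric.ball q 1) (Metric.ball_mem_nhds q one_pos)
      (Filter.Eventually.of_forall fun x =>
        (((hΨcont i).comp (continuous_id.prodMk continuous_const)).aestronglyMeasurable))
      (((hΨcont i).comp (continuous_id.prodMk continuous_const)).intervalIntegrable a b)
      (((hΨcont (i + 1)).comp (continuous_id.prodMk continuous_const)).aestronglyMeasurable)
      (Filter.Eventually.of_forall fun u hu x hx => by
        refine hC (u, x) ⟨uIoc_subset_uIcc hu, ?_⟩
        have := abs_lt.mp (by simpa [Real.dist_eq] using Metric.mem_ball.mp hx)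
        exact ⟨by linarith [this.1], by linarith [this.2]⟩)
      intervalIntegrable_const
      (Filter.Eventually.of_forall fun u _ x _ => stmt6_keyq' H hH i u x)).2
    rw [key.deriv]
    exact integral_congr fun u _ => (stmt6_keyq H hH (i + 1) u q).symm
/-- key bound: derivatives of `q ↦ q^s * B (u, q)` decay like `|q|^(s-i)`. -/
private lemma stmt6_Lb (M : ℝ) (hM : 0 < M) :
    ∀ (i : ℕ) (s : ℕ) (B : ℝ × ℝ → ℝ), ContDiff ℝ (⊤ : ℕ∞) B →
    ∃ C : ℝ, 0 ≤ C ∧ ∀ u q : ℝ, |u| ≤ 1 / 2 → |q| ≤ M →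
      |iteratedDeriv i (fun q : ℝ => q ^ s * B (u, q)) q| ≤ C * |q| ^ (s - i) := by
  intro i
  induction i with
  | zero =>
    intro s B hB
    obtain ⟨C, hC⟩ := (IsCompact.exists_bound_of_continuousOn
      ((isCompact_Icc (a := -(1:ℝ)/2) (b := 1/2)).prod (isCompact_Icc (a := -M) (b := M)))
      hB.continuous.continuousOn)
    refine ⟨max C 0, le_max_right _ _, fun u q hu hq => ?_⟩
    rw [iteratedDeriv_zero]
    have h1 := abs_le.mp hu
    have h2 := abs_le.mp hq
    have hB' : |B (u, q)| ≤ max C 0 :=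
      le_trans (hC (u, q) ⟨⟨by linarith [h1.1], by linarith [h1.2]⟩,
        ⟨by linarith [h2.1], by linarith [h2.2]⟩⟩) (le_max_left _ _)
    rw [abs_mul, abs_pow, Nat.sub_zero, mul_comm]
    exact mul_le_mul_of_nonneg_right hB' (pow_nonneg (abs_nonneg q) s)
  | succ i ih =>
    intro s B hB
    have hB' : Differentiable ℝ B := hB.differentiable (by simp)
    have hD2 : ContDiff ℝ (⊤ : ℕ∞) (fun x : ℝ × ℝ => fderiv ℝ B x (0, 1)) :=
      (ContinuousLinearMap.apply ℝ ℝ ((0:ℝ), (1:ℝ))).contDiff.comp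
        (hB.fderiv_right (m := (⊤ : ℕ∞)) (by exact_mod_cast le_top))
    have hBq : ∀ u q : ℝ, HasDerivAt (fun q : ℝ => B (u, q)) (fderiv ℝ B (u, q) (0, 1)) q :=
      fun u q => (hB' (u, q)).hasFDerivAt.comp_hasDerivAt q
        ((hasDerivAt_const q u).prodMk (hasDerivAt_id q))
    cases s with
    | zero =>
      obtain ⟨C, hC0, hC⟩ := ih 0 (fun x => fderiv ℝ B x (0, 1)) hD2
      refine ⟨C, hC0, fun u q hu hq => ?_⟩
      rw [iteratedDeriv_succ']
      have hd : deriv (fun q : ℝ => q ^ 0 * B (u, q))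
          = fun q : ℝ => q ^ 0 * fderiv ℝ B (u, q) (0, 1) := by
        funext q'
        have : (fun q : ℝ => q ^ 0 * B (u, q)) = fun q : ℝ => B (u, q) := by
          funext x; simp
        rw [this, (hBq u q').deriv]; simp
      rw [hd]
      simpa using hC u q hu hq
    | succ s' =>
      set B' : ℝ × ℝ → ℝ :=
        fun x => ((s' + 1 : ℕ) : ℝ) * B x + x.2 * fderiv ℝ B x (0, 1) with hB'def
      have hB'c : ContDiff ℝ (⊤ : ℕ∞) B' :=
        (contDiff_const.mul hB).add (contDiff_snd.mul hD2)
      obtain ⟨C, hC0, hC⟩ := ih s' B' hB'c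
      refine ⟨C, hC0, fun u q hu hq => ?_⟩
      rw [iteratedDeriv_succ']
      have hd : deriv (fun q : ℝ => q ^ (s' + 1) * B (u, q))
          = fun q : ℝ => q ^ s' * B' (u, q) := by
        funext q'
        rw [(show HasDerivAt (fun q : ℝ => q ^ (s' + 1) * B (u, q)) _ q' from
          ((hasDerivAt_pow (s' + 1) q').mul (hBq u q'))).deriv, hB'def]
        push_cast
        ring
      rw [hd]
      have := hC u q hu hq
      rwa [show s' - i = s' + 1 - (i + 1) by omega] at this
private lemma stmt6_cmul (c : ℝ) (g : ℝ → ℝ) (hg : ContDiff ℝ (⊤ : ℕ∞) g) (n : ℕ) :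
    ∀ x : ℝ, iteratedDeriv n (fun y => c * g y) x = c * iteratedDeriv n g x := by
  induction n generalizing g with
  | zero => intro x; simp
  | succ n ih =>
    intro x
    rw [iteratedDeriv_succ', iteratedDeriv_succ']
    have hd : deriv (fun y => c * g y) = fun y => c * deriv g y := by
      funext y
      exact deriv_const_mul c ((hg.differentiable (by simp)) y)
    rw [hd]
    exact ih (deriv g) (contDiff_infty_iff_deriv.mp hg).2 x
private lemma stmt6_ibp2 (ψ : ℝ → ℝ) (hψ : ContDiff ℝ (⊤ : ℕ∞) ψ)
    (hper : ∀ u : ℝ, ψ (u + 1) = ψ u) (n : ℕ) (hn : 1 ≤ n) :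
    ∫ u in (-(1:ℝ)/2)..(1/2), ψ u * Real.cos (2 * n * π * u)
      = -(1 / (2 * n * π) ^ 2) *
        ∫ u in (-(1:ℝ)/2)..(1/2), deriv (deriv ψ) u * Real.cos (2 * n * π * u) := by
  have hπ := Real.pi_pos
  have hn' : (1:ℝ) ≤ n := by exact_mod_cast hn
  set c : ℝ := 2 * n * π with hc
  have hc0 : 0 < c := by positivity
  have hψd : Differentiable ℝ ψ := hψ.differentiable (by simp)
  have hψ' : ContDiff ℝ (⊤ : ℕ∞) (deriv ψ) := (contDiff_infty_iff_deriv.mp hψ).2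
  have hψ'd : Differentiable ℝ (deriv ψ) := hψ'.differentiable (by simp)
  have hψ'' : Continuous (deriv (deriv ψ)) := (contDiff_infty_iff_deriv.mp hψ').2.continuous
  -- derivative facts
  have hv : ∀ x : ℝ, HasDerivAt (fun x : ℝ => Real.sin (c * x) / c) (Real.cos (c * x)) x := by
    intro x
    have := ((Real.hasDerivAt_sin (c * x)).comp x ((hasDerivAt_id x).const_mul c)).div_const c
    simpa [mul_comm, mul_div_assoc, mul_div_cancel_left₀ _ (ne_of_gt hc0)] using this
  have hw : ∀ x : ℝ, HasDerivAt (fun x : ℝ => -(Real.cos (c * x)) / c) (Real.sin (c * x)) x := by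
    intro x
    have := (((Real.hasDerivAt_cos (c * x)).comp x ((hasDerivAt_id x).const_mul c)).neg).div_const c
    have h2 : -(-Real.sin (c * x) * c) / c = Real.sin (c * x) := by
      field_simp
    simpa [neg_div, h2, mul_div_cancel_right₀ _ (ne_of_gt hc0)] using this
  have hsin0 : Real.sin (c * (1/2)) = 0 := by
    have : c * (1/2) = n * π := by rw [hc]; ring
    rw [this]; exact Real.sin_nat_mul_pi n
  have hsin0' : Real.sin (c * (-(1:ℝ)/2)) = 0 := by
    have : c * (-(1:ℝ)/2) = -(n * π) := by rw [hc]; ring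
    rw [this, Real.sin_neg, Real.sin_nat_mul_pi]; ring
  have hcos_eq : Real.cos (c * (-(1:ℝ)/2)) = Real.cos (c * (1/2)) := by
    have : c * (-(1:ℝ)/2) = -(c * (1/2)) := by ring
    rw [this, Real.cos_neg]
  have hper' : deriv ψ (1/2) = deriv ψ (-(1:ℝ)/2) := by
    have h1 : deriv (fun x : ℝ => ψ (x + 1)) (-(1:ℝ)/2) = deriv ψ (-(1:ℝ)/2 + 1) :=
      deriv_comp_add_const _ _ _
    have h2 : (fun x : ℝ => ψ (x + 1)) = ψ := funext hper
    rw [h2] at h1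
    rw [show (1:ℝ)/2 = -(1:ℝ)/2 + 1 by ring, ← h1]
  -- first integration by parts
  have step1 : ∫ u in (-(1:ℝ)/2)..(1/2), ψ u * Real.cos (c * u)
      = -(1/c) * ∫ u in (-(1:ℝ)/2)..(1/2), deriv ψ u * Real.sin (c * u) := by
    have := intervalIntegral.integral_mul_deriv_eq_deriv_mul
      (u := ψ) (u' := deriv ψ) (v := fun x => Real.sin (c * x) / c)
      (v' := fun x => Real.cos (c * x)) (a := -(1:ℝ)/2) (b := 1/2)
      (fun x _ => (hψd x).hasDerivAt) (fun x _ => hv x)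
      ((hψ'.continuous).intervalIntegrable _ _)
      ((Real.continuous_cos.comp (continuous_const.mul continuous_id)).intervalIntegrable _ _)
    rw [this]
    simp only [hsin0, hsin0']
    rw [show ∫ u in (-(1:ℝ)/2)..(1/2), deriv ψ u * (Real.sin (c * u) / c)
        = (1/c) * ∫ u in (-(1:ℝ)/2)..(1/2), deriv ψ u * Real.sin (c * u) by
      rw [← intervalIntegral.integral_const_mul]
      exact intervalIntegral.integral_congr fun u _ => by ring]
    ring
  -- second integration by parts
  have step2 : ∫ u in (-(1:ℝ)/2)..(1/2), deriv ψ u * Real.sin (c * u)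
      = (1/c) * ∫ u in (-(1:ℝ)/2)..(1/2), deriv (deriv ψ) u * Real.cos (c * u) := by
    have := intervalIntegral.integral_mul_deriv_eq_deriv_mul
      (u := deriv ψ) (u' := deriv (deriv ψ)) (v := fun x => -(Real.cos (c * x)) / c)
      (v' := fun x => Real.sin (c * x)) (a := -(1:ℝ)/2) (b := 1/2)
      (fun x _ => (hψ'd x).hasDerivAt) (fun x _ => hw x)
      (hψ''.intervalIntegrable _ _)
      ((Real.continuous_sin.comp (continuous_const.mul continuous_id)).intervalIntegrable _ _)
    rw [this]
    simp only [hcos_eq, hper']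
    rw [show ∫ u in (-(1:ℝ)/2)..(1/2), deriv (deriv ψ) u * (-(Real.cos (c * u)) / c)
        = -(1/c) * ∫ u in (-(1:ℝ)/2)..(1/2), deriv (deriv ψ) u * Real.cos (c * u) by
      rw [← intervalIntegral.integral_const_mul]
      exact intervalIntegral.integral_congr fun u _ => by ring]
    ring
  calc ∫ u in (-(1:ℝ)/2)..(1/2), ψ u * Real.cos (2 * n * π * u)
      = -(1/c) * ((1/c) * ∫ u in (-(1:ℝ)/2)..(1/2), deriv (deriv ψ) u * Real.cos (c * u)) := by
        rw [← step2, ← step1]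
    _ = -(1 / (2 * n * π) ^ 2) *
        ∫ u in (-(1:ℝ)/2)..(1/2), deriv (deriv ψ) u * Real.cos (2 * n * π * u) := by
        rw [show ∫ u in (-(1:ℝ)/2)..(1/2), deriv (deriv ψ) u * Real.cos (c * u)
            = ∫ u in (-(1:ℝ)/2)..(1/2), deriv (deriv ψ) u * Real.cos (2 * n * π * u) from
          intervalIntegral.integral_congr fun u _ => by rw [hc]]
        rw [hc]; ring

private lemma stmt6_ibp (r : ℕ) : ∀ (ψ : ℝ → ℝ), ContDiff ℝ (⊤ : ℕ∞) ψ →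
    (∀ u : ℝ, ψ (u + 1) = ψ u) → ∀ n : ℕ, 1 ≤ n →
    ∫ u in (-(1:ℝ)/2)..(1/2), ψ u * Real.cos (2 * n * π * u)
      = (-(1 / (2 * n * π) ^ 2)) ^ r *
        ∫ u in (-(1:ℝ)/2)..(1/2), iteratedDeriv (2 * r) ψ u * Real.cos (2 * n * π * u) := by
  induction r with
  | zero => intro ψ hψ hper n hn; simp
  | succ r ih =>
    intro ψ hψ hper n hn
    have hψ' : ContDiff ℝ (⊤ : ℕ∞) (deriv ψ) := (contDiff_infty_iff_deriv.mp hψ).2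
    have hψ'' : ContDiff ℝ (⊤ : ℕ∞) (deriv (deriv ψ)) := (contDiff_infty_iff_deriv.mp hψ').2
    have hper1 : ∀ (g : ℝ → ℝ), (∀ u : ℝ, g (u + 1) = g u) →
        ∀ u : ℝ, deriv g (u + 1) = deriv g u := by
      intro g hg u
      have h1 : deriv (fun x : ℝ => g (x + 1)) u = deriv g (u + 1) := deriv_comp_add_const _ _ _
      rw [← h1, funext hg]
    have hper2 : ∀ u : ℝ, deriv (deriv ψ) (u + 1) = deriv (deriv ψ) u :=
      hper1 _ (hper1 _ hper)
    rw [stmt6_ibp2 ψ hψ hper n hn, ih (deriv (deriv ψ)) hψ'' hper2 n hn]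
    have : iteratedDeriv (2 * r) (deriv (deriv ψ)) = iteratedDeriv (2 * (r + 1)) ψ := by
      rw [show 2 * (r + 1) = (2 * r + 1) + 1 by ring, iteratedDeriv_succ',
        iteratedDeriv_succ']
    rw [this]; ring

/-- Uniform bounds on the derivatives of the Fourier coefficients: for every
`i ≥ 0`, `k ≥ 1` and `M > 0` there exists a constant `K`, independent of `n`,
with `|α_n^{(i)}(q)/q^k| ≤ K/n^k` for all `0 < |q| < M`. -/
theorem stmt6 (f : ℝ × ℝ → ℝ) (hf : ContDiff ℝ (⊤ : ℕ∞) f)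
    (hinv : ∀ (n : ℤ) (p q : ℝ), f (p + n * q, q) = f (p, q))
    (i k : ℕ) (hk : 1 ≤ k) (M : ℝ) (hM : 0 < M)
    (α : ℕ → ℝ → ℝ)
    (hα : ∀ (n : ℕ) (q : ℝ), α n q =
      2 * ∫ u in (-(1:ℝ)/2)..(1/2), f (u * q, q) * Real.cos (2 * n * π * u)) :
    ∃ K : ℝ, ∀ n : ℕ, 1 ≤ n → ∀ q : ℝ, |q| < M → q ≠ 0 →
      |iteratedDeriv i (α n) q / q ^ k| ≤ K / (n : ℝ) ^ k := by
  have hπ := Real.pi_pos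
  set r : ℕ := k + i with hr
  set m : ℕ := 2 * r with hm
  set A : ℝ × ℝ → ℝ := fun x => iteratedFDeriv ℝ m f x (fun _ => ((1:ℝ), (0:ℝ))) with hA
  have hAc : ContDiff ℝ (⊤ : ℕ∞) A := stmt6_smooth_eval f hf m _
  set B₀ : ℝ × ℝ → ℝ := fun x => A (x.1 * x.2, x.2) with hB₀
  have hB₀c : ContDiff ℝ (⊤ : ℕ∞) B₀ :=
    hAc.comp ((contDiff_fst.mul contDiff_snd).prodMk contDiff_snd)
  obtain ⟨C₀, hC₀0, hC₀⟩ := stmt6_Lb M hM i m B₀ hB₀c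
  set Mx : ℝ := max M 1 with hMx
  set C₁ : ℝ := C₀ * Mx ^ r with hC₁
  refine ⟨2 * C₁, ?_⟩
  intro n hn q hqM hq0
  have hn' : (1:ℝ) ≤ (n:ℝ) := by exact_mod_cast hn
  have hnpos : (0:ℝ) < (n:ℝ) := by linarith
  have hq' : |q| ≤ M := hqM.le
  have hqk : 0 < |q| ^ k := pow_pos (abs_pos.mpr hq0) k
  -- the 2r-th u-derivative of u ↦ f (u q, q)
  have hIt : ∀ q' u : ℝ, iteratedDeriv m (fun u : ℝ => f (u * q', q')) u
      = q' ^ m * B₀ (u, q') := by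
    intro q' u
    have h := stmt6_key f hf m (0, q') (q', 0) u
    simp only [Prod.smul_mk, Prod.mk_add_mk, smul_eq_mul, mul_zero, mul_one, add_zero,
      zero_add] at h
    rw [h]
    have hv : (fun _ : Fin m => ((q':ℝ), (0:ℝ))) = fun _ : Fin m => q' • ((1:ℝ), (0:ℝ)) := by
      funext _; simp
    rw [hv, (iteratedFDeriv ℝ m f (u * q', q')).map_smul_univ]
    simp [hA, hB₀]
  -- periodicity of u ↦ f (u q, q)
  have hper : ∀ q' u : ℝ, (fun u : ℝ => f (u * q', q')) (u + 1)
      = (fun u : ℝ => f (u * q', q')) u := by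
    intro q' u
    have h := hinv 1 (u * q') q'
    simp only [Int.cast_one, one_mul] at h
    show f ((u + 1) * q', q') = f (u * q', q')
    rw [show (u + 1) * q' = u * q' + q' by ring]
    exact h
  set cst : ℝ := 2 * (-(1 / (2 * (n:ℝ) * π) ^ 2)) ^ r with hcst
  set Hn : ℝ × ℝ → ℝ :=
    fun x => cst * ((x.2 ^ m * B₀ x) * Real.cos (2 * n * π * x.1)) with hHn
  have hHnc : ContDiff ℝ (⊤ : ℕ∞) Hn := contDiff_const.mul
    (((contDiff_snd.pow m).mul hB₀c).mul
      (Real.contDiff_cos.comp (contDiff_const.mul contDiff_fst)))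
  -- the identity  α n q' = ∫ Hn (u, q')
  have hαid : α n = fun q' : ℝ => ∫ u in (-(1:ℝ)/2)..(1/2), Hn (u, q') := by
    funext q'
    rw [hα n q']
    have hsm : ContDiff ℝ (⊤ : ℕ∞) (fun u : ℝ => f (u * q', q')) :=
      hf.comp ((contDiff_id.mul contDiff_const).prodMk contDiff_const)
    rw [stmt6_ibp r _ hsm (hper q') n hn]
    have hint : ∫ u in (-(1:ℝ)/2)..(1/2),
          iteratedDeriv (2 * r) (fun u : ℝ => f (u * q', q')) u * Real.cos (2 * n * π * u)
        = ∫ u in (-(1:ℝ)/2)..(1/2), (q' ^ m * B₀ (u, q')) * Real.cos (2 * n * π * u) :=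
      intervalIntegral.integral_congr fun u _ => by rw [← hm, hIt q' u]
    rw [hint]
    have h2 : ∫ u in (-(1:ℝ)/2)..(1/2), Hn (u, q')
        = cst * ∫ u in (-(1:ℝ)/2)..(1/2), (q' ^ m * B₀ (u, q')) * Real.cos (2 * n * π * u) := by
      rw [← intervalIntegral.integral_const_mul]
    rw [h2, hcst]
    ring
  -- bound on |cst|
  have hc2 : (n:ℝ) ^ k ≤ (2 * n * π) ^ (2 * r) := by
    calc (n:ℝ) ^ k ≤ (n:ℝ) ^ (2 * r) := pow_le_pow_right₀ hn' (by omega)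
      _ ≤ (2 * n * π) ^ (2 * r) :=
        pow_le_pow_left₀ hnpos.le (by nlinarith [Real.pi_gt_three]) _
  have hcstb : |cst| ≤ 2 / (n:ℝ) ^ k := by
    rw [hcst, abs_mul, abs_pow, abs_neg,
      abs_of_nonneg (by positivity : (0:ℝ) ≤ 1 / (2 * (n:ℝ) * π) ^ 2),
      abs_of_nonneg (by norm_num : (0:ℝ) ≤ 2),
      show ((1:ℝ) / (2 * (n:ℝ) * π) ^ 2) ^ r = 1 / ((2 * (n:ℝ) * π) ^ (2 * r)) by
        rw [div_pow, one_pow, ← pow_mul],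
      mul_one_div]
    exact div_le_div_of_nonneg_left (by norm_num) (by positivity) hc2
  -- pointwise bound on the differentiated integrand
  have hpt : ∀ u ∈ Set.uIoc (-(1:ℝ)/2) ((1:ℝ)/2),
      ‖iteratedDeriv i (fun q' : ℝ => Hn (u, q')) q‖
        ≤ 2 / (n:ℝ) ^ k * (C₀ * Mx ^ r) * |q| ^ k := by
    intro u hu
    have hu' : |u| ≤ 1 / 2 := by
      rw [Set.uIoc_of_le (by norm_num : -(1:ℝ)/2 ≤ (1:ℝ)/2)] at hu
      exact abs_le.mpr ⟨by linarith [hu.1], hu.2⟩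
    have hfun : (fun q' : ℝ => Hn (u, q'))
        = fun q' : ℝ => (cst * Real.cos (2 * n * π * u)) * (q' ^ m * B₀ (u, q')) := by
      funext q'
      show cst * ((q' ^ m * B₀ (u, q')) * Real.cos (2 * n * π * u)) = _
      ring
    have hsm : ContDiff ℝ (⊤ : ℕ∞) (fun q' : ℝ => q' ^ m * B₀ (u, q')) :=
      (contDiff_id.pow m).mul (hB₀c.comp (contDiff_const.prodMk contDiff_id))
    rw [hfun, funext (stmt6_cmul (cst * Real.cos (2 * n * π * u)) _ hsm i)]
    have h1 : |iteratedDeriv i (fun q' : ℝ => q' ^ m * B₀ (u, q')) q|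
        ≤ C₀ * (|q| ^ k * Mx ^ r) := by
      refine (hC₀ u q hu' hq').trans ?_
      rw [show m - i = k + r by omega, pow_add]
      have h2 : |q| ^ r ≤ Mx ^ r :=
        pow_le_pow_left₀ (abs_nonneg q) (hq'.trans (le_max_left M 1)) r
      exact mul_le_mul_of_nonneg_left
        (mul_le_mul_of_nonneg_left h2 (pow_nonneg (abs_nonneg q) k)) hC₀0
    have h3 : |cst * Real.cos (2 * n * π * u)| ≤ 2 / (n:ℝ) ^ k := by
      rw [abs_mul]
      have := mul_le_mul hcstb (Real.abs_cos_le_one (2 * n * π * u)) (abs_nonneg _)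
        (by positivity : (0:ℝ) ≤ 2 / (n:ℝ) ^ k)
      simpa using this
    calc ‖cst * Real.cos (2 * n * π * u) * iteratedDeriv i (fun q' : ℝ => q' ^ m * B₀ (u, q')) q‖
        = |cst * Real.cos (2 * n * π * u)|
          * |iteratedDeriv i (fun q' : ℝ => q' ^ m * B₀ (u, q')) q| := by
          rw [Real.norm_eq_abs, abs_mul]
      _ ≤ 2 / (n:ℝ) ^ k * (C₀ * (|q| ^ k * Mx ^ r)) :=
          mul_le_mul h3 h1 (abs_nonneg _) (by positivity)
      _ = 2 / (n:ℝ) ^ k * (C₀ * Mx ^ r) * |q| ^ k := by ring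
  -- put everything together
  rw [hαid, stmt6_UI Hn hHnc i (-(1:ℝ)/2) ((1:ℝ)/2) q, abs_div, abs_pow, div_le_iff₀ hqk]
  calc |∫ u in (-(1:ℝ)/2)..((1:ℝ)/2), iteratedDeriv i (fun q' : ℝ => Hn (u, q')) q|
      ≤ 2 / (n:ℝ) ^ k * (C₀ * Mx ^ r) * |q| ^ k * |(1:ℝ)/2 - (-(1:ℝ)/2)| :=
        intervalIntegral.norm_integral_le_of_norm_le_const hpt
    _ = 2 * C₁ / (n:ℝ) ^ k * |q| ^ k := by
        rw [show |(1:ℝ)/2 - (-(1:ℝ)/2)| = 1 by norm_num, hC₁]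
        ring
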